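/- If S ⊆ ℤ \ {0} is finite with |S| = d ≥ 2, then the domination ratio of the integer distance digraph Γ(ℤ, S) satisfies 1/(d+1) ≤ γ̄(ℤ, S) ≤ 1/2. -/

import Mathlib

open Filter

/-- Lower density of a set of integers. -/
noncomputable def lowerDensity (D : Set ℤ) : ℝ :=
  Filter.liminf (fun n : ℕ =>
    ((D ∩ Set.Icc (-(n : ℤ)) (n : ℤ)).ncard : ℝ) / (2 * (n : ℝ) + 1)) Filter.atTop

/-- `D` is a dominating set of the integer distance digraph `Γ(ℤ,S)`. -/
def Dominating (S D : Set ℤ) : Prop :=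
  ∀ m : ℤ, m ∈ D ∨ ∃ u ∈ D, ∃ s ∈ S, m = u + s

/-- Domination ratio of `Γ(ℤ,S)`. -/
noncomputable def dominationRatio (S : Set ℤ) : ℝ :=
  sInf (lowerDensity '' {D : Set ℤ | Dominating S D})

/-- `D` is an efficient dominating set of `Γ(ℤ,S)`: every integer is dominated
by exactly one element of `D`. -/
def EffDominating (S D : Set ℤ) : Prop :=
  ∀ m : ℤ, ∃! u, u ∈ D ∧ (u = m ∨ m - u ∈ S)

private lemma ncard_Icc_int (a b : ℤ) : (Set.Icc a b).ncard = (b + 1 - a).toNat := by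
  rw [← Finset.coe_Icc, Set.ncard_coe_finset, Int.card_Icc]

private lemma tendsto_inv_aux :
    Tendsto (fun n : ℕ => (2 * (n : ℝ) + 1)⁻¹) atTop (nhds 0) := by
  apply Filter.Tendsto.inv_tendsto_atTop
  exact tendsto_atTop_add_const_right _ 1
    ((tendsto_natCast_atTop_atTop (R := ℝ)).const_mul_atTop two_pos)

private lemma densFun_nonneg (D : Set ℤ) (n : ℕ) :
    (0 : ℝ) ≤ ((D ∩ Set.Icc (-(n : ℤ)) (n : ℤ)).ncard : ℝ) / (2 * (n : ℝ) + 1) := by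
  positivity

private lemma densFun_le_one (D : Set ℤ) (n : ℕ) :
    ((D ∩ Set.Icc (-(n : ℤ)) (n : ℤ)).ncard : ℝ) / (2 * (n : ℝ) + 1) ≤ 1 := by
  have hpos : (0 : ℝ) < 2 * (n : ℝ) + 1 := by positivity
  rw [div_le_one hpos]
  have hsub : (D ∩ Set.Icc (-(n : ℤ)) (n : ℤ)).ncard ≤ (Set.Icc (-(n : ℤ)) (n : ℤ)).ncard :=
    Set.ncard_le_ncard Set.inter_subset_right (Set.finite_Icc _ _)
  have hcard : (Set.Icc (-(n : ℤ)) (n : ℤ)).ncard = 2 * n + 1 := by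
    rw [ncard_Icc_int]; omega
  have : (D ∩ Set.Icc (-(n : ℤ)) (n : ℤ)).ncard ≤ 2 * n + 1 := hcard ▸ hsub
  calc ((D ∩ Set.Icc (-(n : ℤ)) (n : ℤ)).ncard : ℝ) ≤ ((2 * n + 1 : ℕ) : ℝ) := by
        exact_mod_cast this
    _ = 2 * (n : ℝ) + 1 := by push_cast; ring

private lemma density_lower (S : Set ℤ) (d : ℕ) (hS : S.Finite) (h0 : 0 ∉ S)
    (hcard : S.ncard = d) (D : Set ℤ) (hD : Dominating S D) :
    1 / ((d : ℝ) + 1) ≤ lowerDensity D := by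
  classical
  obtain ⟨a, ha⟩ := hS.bddAbove
  obtain ⟨b, hb⟩ := hS.bddBelow
  set M : ℤ := |a| + |b| with hMdef
  have hM0 : 0 ≤ M := by positivity
  have hM : ∀ s ∈ S, -M ≤ s ∧ s ≤ M := by
    intro s hs
    have h1 : s ≤ a := ha hs
    have h2 : b ≤ s := hb hs
    have h3 := le_abs_self a
    have h4 := neg_abs_le b
    have h5 := abs_nonneg a
    have h6 := abs_nonneg b
    omega
  have hdom : ∀ m : ℤ, ∃ u, u ∈ D ∧ ∃ t, t ∈ insert (0 : ℤ) S ∧ m = u + t := by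
    intro m
    rcases hD m with h | ⟨u, hu, s, hs, rfl⟩
    · exact ⟨m, h, 0, Set.mem_insert _ _, (add_zero m).symm⟩
    · exact ⟨u, hu, s, Set.mem_insert_of_mem _ hs, rfl⟩
  choose u hu t ht hmut using hdom
  have hinsfin : (insert (0 : ℤ) S).Finite := hS.insert 0
  have key : ∀ n : ℕ, (2 * n + 1 : ℕ) ≤
      ((D ∩ Set.Icc (-(n : ℤ)) (n : ℤ)).ncard + 2 * M.toNat) * (d + 1) := by
    intro n
    set bigD := D ∩ Set.Icc (-(n : ℤ) - M) ((n : ℤ) + M) with hbigdef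
    have hbigfin : bigD.Finite := Set.Finite.inter_of_right (Set.finite_Icc _ _) _
    have hsub : Finset.Icc (-(n : ℤ)) (n : ℤ) ⊆
        hinsfin.toFinset.biUnion (fun s => hbigfin.toFinset.image (· + s)) := by
      intro m hm
      simp only [Finset.mem_Icc] at hm
      refine Finset.mem_biUnion.2 ⟨t m, by simpa using ht m, ?_⟩
      refine Finset.mem_image.2 ⟨u m, ?_, (hmut m).symm⟩
      rw [Set.Finite.mem_toFinset]
      refine ⟨hu m, ?_⟩
      have htb : -M ≤ t m ∧ t m ≤ M := by
        rcases Set.mem_insert_iff.1 (ht m) with h | h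
        · omega
        · exact hM _ h
      have hueq : m = u m + t m := hmut m
      simp only [Set.mem_Icc]
      omega
    have hc1 := Finset.card_le_card hsub
    have hc2 : (hinsfin.toFinset.biUnion (fun s => hbigfin.toFinset.image (· + s))).card ≤
        ∑ s ∈ hinsfin.toFinset, (hbigfin.toFinset.image (· + s)).card :=
      Finset.card_biUnion_le
    have hc3 : ∑ s ∈ hinsfin.toFinset, (hbigfin.toFinset.image (· + s)).card ≤
        hinsfin.toFinset.card * hbigfin.toFinset.card := by
      calc ∑ s ∈ hinsfin.toFinset, (hbigfin.toFinset.image (· + s)).card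
          ≤ ∑ _s ∈ hinsfin.toFinset, hbigfin.toFinset.card :=
            Finset.sum_le_sum (fun i _ => Finset.card_image_le)
        _ = hinsfin.toFinset.card * hbigfin.toFinset.card := by
            rw [Finset.sum_const, smul_eq_mul]
    have hT : hinsfin.toFinset.card = d + 1 := by
      rw [← Set.ncard_eq_toFinset_card _ hinsfin, Set.ncard_insert_of_notMem h0 hS, hcard]
    have hIcc : (Finset.Icc (-(n : ℤ)) (n : ℤ)).card = 2 * n + 1 := by
      rw [Int.card_Icc]; omega
    have hB : hbigfin.toFinset.card = bigD.ncard := (Set.ncard_eq_toFinset_card _ hbigfin).symm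
    have hbsub : bigD ⊆ (D ∩ Set.Icc (-(n : ℤ)) (n : ℤ)) ∪
        (Set.Icc (-(n : ℤ) - M) (-(n : ℤ) - 1) ∪ Set.Icc ((n : ℤ) + 1) ((n : ℤ) + M)) := by
      rintro x ⟨hxD, hx⟩
      simp only [Set.mem_Icc] at hx
      by_cases h1 : -(n : ℤ) ≤ x ∧ x ≤ n
      · exact Or.inl ⟨hxD, Set.mem_Icc.2 h1⟩
      · right
        simp only [Set.mem_union, Set.mem_Icc]
        omega
    have hbcard : bigD.ncard ≤ (D ∩ Set.Icc (-(n : ℤ)) (n : ℤ)).ncard + 2 * M.toNat := by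
      have hfin2 : ((D ∩ Set.Icc (-(n : ℤ)) (n : ℤ)) ∪
          (Set.Icc (-(n : ℤ) - M) (-(n : ℤ) - 1) ∪ Set.Icc ((n : ℤ) + 1) ((n : ℤ) + M))).Finite :=
        ((Set.finite_Icc _ _).inter_of_right _).union ((Set.finite_Icc _ _).union (Set.finite_Icc _ _))
      have h1 := Set.ncard_le_ncard hbsub hfin2
      have h2 := Set.ncard_union_le (D ∩ Set.Icc (-(n : ℤ)) (n : ℤ))
        (Set.Icc (-(n : ℤ) - M) (-(n : ℤ) - 1) ∪ Set.Icc ((n : ℤ) + 1) ((n : ℤ) + M))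
      have h3 := Set.ncard_union_le (Set.Icc (-(n : ℤ) - M) (-(n : ℤ) - 1))
        (Set.Icc ((n : ℤ) + 1) ((n : ℤ) + M))
      have h4 : (Set.Icc (-(n : ℤ) - M) (-(n : ℤ) - 1)).ncard = M.toNat := by
        rw [ncard_Icc_int]; omega
      have h5 : (Set.Icc ((n : ℤ) + 1) ((n : ℤ) + M)).ncard = M.toNat := by
        rw [ncard_Icc_int]; omega
      omega
    calc (2 * n + 1 : ℕ) = (Finset.Icc (-(n : ℤ)) (n : ℤ)).card := hIcc.symm
      _ ≤ hinsfin.toFinset.card * hbigfin.toFinset.card := le_trans hc1 (le_trans hc2 hc3)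
      _ = (d + 1) * bigD.ncard := by rw [hT, hB]
      _ ≤ (d + 1) * ((D ∩ Set.Icc (-(n : ℤ)) (n : ℤ)).ncard + 2 * M.toNat) :=
          Nat.mul_le_mul_left _ hbcard
      _ = ((D ∩ Set.Icc (-(n : ℤ)) (n : ℤ)).ncard + 2 * M.toNat) * (d + 1) := by ring
  -- analytic part
  set f : ℕ → ℝ := fun n =>
    ((D ∩ Set.Icc (-(n : ℤ)) (n : ℤ)).ncard : ℝ) / (2 * (n : ℝ) + 1) with hfdef
  set g : ℕ → ℝ := fun n =>
    1 / ((d : ℝ) + 1) - (2 * (M.toNat : ℝ)) * (2 * (n : ℝ) + 1)⁻¹ with hgdef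
  have hg : Tendsto g atTop (nhds (1 / ((d : ℝ) + 1))) := by
    rw [hgdef]
    have h1 := tendsto_inv_aux.const_mul (2 * (M.toNat : ℝ))
    have h2 : Tendsto (fun n : ℕ => 1 / ((d : ℝ) + 1) -
        (2 * (M.toNat : ℝ)) * (2 * (n : ℝ) + 1)⁻¹) atTop
        (nhds (1 / ((d : ℝ) + 1) - (2 * (M.toNat : ℝ)) * 0)) :=
      tendsto_const_nhds.sub h1
    simpa only [mul_zero, sub_zero] using h2
  have hfg : ∀ n, g n ≤ f n := by
    intro n
    have hk := key n
    have hdpos : (0 : ℝ) < (d : ℝ) + 1 := by positivity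
    have hpos : (0 : ℝ) < 2 * (n : ℝ) + 1 := by positivity
    have hkR : (2 * (n : ℝ) + 1) ≤
        (((D ∩ Set.Icc (-(n : ℤ)) (n : ℤ)).ncard : ℝ) + 2 * (M.toNat : ℝ)) * ((d : ℝ) + 1) := by
      have h := (Nat.cast_le (α := ℝ)).2 hk
      push_cast at h
      linarith
    have heq : g n = ((2 * (n : ℝ) + 1) - 2 * (M.toNat : ℝ) * ((d : ℝ) + 1)) /
        (((d : ℝ) + 1) * (2 * (n : ℝ) + 1)) := by
      simp only [hgdef]
      field_simp
    rw [heq, hfdef]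
    rw [div_le_div_iff₀ (by positivity) hpos]
    nlinarith [hkR, Nat.cast_nonneg (α := ℝ) (D ∩ Set.Icc (-(n : ℤ)) (n : ℤ)).ncard]
  have hcob : IsCoboundedUnder (· ≥ ·) atTop f :=
    isCoboundedUnder_ge_of_le atTop (fun n => densFun_le_one D n)
  have h1 : liminf g atTop ≤ liminf f atTop :=
    liminf_le_liminf (Eventually.of_forall hfg) hg.isBoundedUnder_ge hcob
  calc 1 / ((d : ℝ) + 1) = liminf g atTop := hg.liminf_eq.symm
    _ ≤ liminf f atTop := h1
    _ = lowerDensity D := rfl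

private lemma density_upper (S : Set ℤ) (s : ℤ) (hs : s ∈ S) (hs0 : s ≠ 0) :
    ∃ D, Dominating S D ∧ lowerDensity D ≤ 1 / 2 := by
  classical
  set D : Set ℤ := {m : ℤ | m / s % 2 = 0} with hDdef
  have hdiv_sub : ∀ m : ℤ, (m - s) / s = m / s - 1 := by
    intro m
    have h2 : m - s = m + (-1) * s := by ring
    rw [h2, Int.add_mul_ediv_right _ _ hs0]; ring
  have hdiv_add : ∀ m : ℤ, (m + s) / s = m / s + 1 := by
    intro m
    have h2 : m + s = m + 1 * s := by ring
    rw [h2, Int.add_mul_ediv_right _ _ hs0]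
  have hdom : Dominating S D := by
    intro m
    by_cases h : m / s % 2 = 0
    · exact Or.inl h
    · refine Or.inr ⟨m - s, ?_, s, hs, by ring⟩
      show (m - s) / s % 2 = 0
      rw [hdiv_sub m]
      set k := m / s
      omega
  refine ⟨D, hdom, ?_⟩
  set K : ℤ := |s| with hKdef
  have hK0 : 0 ≤ K := abs_nonneg s
  have hKs : -K ≤ s ∧ s ≤ K := ⟨neg_abs_le s, le_abs_self s⟩
  have key : ∀ n : ℕ, 2 * (D ∩ Set.Icc (-(n : ℤ)) (n : ℤ)).ncard ≤
      2 * n + 1 + 2 * K.toNat := by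
    intro n
    set A := D ∩ Set.Icc (-(n : ℤ)) (n : ℤ) with hAdef
    set B := Dᶜ ∩ Set.Icc (-(n : ℤ)) (n : ℤ) with hBdef
    set Bbig := Dᶜ ∩ Set.Icc (-(n : ℤ) - K) ((n : ℤ) + K) with hBbigdef
    have hBbigfin : Bbig.Finite := Set.Finite.inter_of_right (Set.finite_Icc _ _) _
    have hAfin : A.Finite := Set.Finite.inter_of_right (Set.finite_Icc _ _) _
    have hinj : A.ncard ≤ Bbig.ncard := by
      apply Set.ncard_le_ncard_of_injOn (· + s)
      · rintro x ⟨hxD, hx⟩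
        simp only [Set.mem_Icc] at hx
        constructor
        · show ¬ (x + s) / s % 2 = 0
          rw [hdiv_add x]
          have hxD' : x / s % 2 = 0 := hxD
          set k := x / s
          omega
        · simp only [Set.mem_Icc]; omega
      · exact fun x _ y _ h => add_left_injective s h
    have hsplit : A.ncard + B.ncard = 2 * n + 1 := by
      have h1 := Set.ncard_inter_add_ncard_diff_eq_ncard
        (Set.Icc (-(n : ℤ)) (n : ℤ)) D (Set.finite_Icc _ _)
      have h2 : Set.Icc (-(n : ℤ)) (n : ℤ) ∩ D = A := Set.inter_comm _ _
      have h3 : Set.Icc (-(n : ℤ)) (n : ℤ) \ D = B := by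
        rw [Set.diff_eq, Set.inter_comm]
      have h4 : (Set.Icc (-(n : ℤ)) (n : ℤ)).ncard = 2 * n + 1 := by
        rw [ncard_Icc_int]; omega
      rw [h2, h3, h4] at h1
      exact h1
    have hbsub : Bbig ⊆ B ∪
        (Set.Icc (-(n : ℤ) - K) (-(n : ℤ) - 1) ∪ Set.Icc ((n : ℤ) + 1) ((n : ℤ) + K)) := by
      rintro x ⟨hxD, hx⟩
      simp only [Set.mem_Icc] at hx
      by_cases h1 : -(n : ℤ) ≤ x ∧ x ≤ n
      · exact Or.inl ⟨hxD, Set.mem_Icc.2 h1⟩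
      · right
        simp only [Set.mem_union, Set.mem_Icc]
        omega
    have hbcard : Bbig.ncard ≤ B.ncard + 2 * K.toNat := by
      have hfin2 : (B ∪ (Set.Icc (-(n : ℤ) - K) (-(n : ℤ) - 1) ∪
          Set.Icc ((n : ℤ) + 1) ((n : ℤ) + K))).Finite :=
        ((Set.finite_Icc _ _).inter_of_right _).union
          ((Set.finite_Icc _ _).union (Set.finite_Icc _ _))
      have h1 := Set.ncard_le_ncard hbsub hfin2
      have h2 := Set.ncard_union_le B
        (Set.Icc (-(n : ℤ) - K) (-(n : ℤ) - 1) ∪ Set.Icc ((n : ℤ) + 1) ((n : ℤ) + K))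
      have h3 := Set.ncard_union_le (Set.Icc (-(n : ℤ) - K) (-(n : ℤ) - 1))
        (Set.Icc ((n : ℤ) + 1) ((n : ℤ) + K))
      have h4 : (Set.Icc (-(n : ℤ) - K) (-(n : ℤ) - 1)).ncard = K.toNat := by
        rw [ncard_Icc_int]; omega
      have h5 : (Set.Icc ((n : ℤ) + 1) ((n : ℤ) + K)).ncard = K.toNat := by
        rw [ncard_Icc_int]; omega
      omega
    omega
  set f : ℕ → ℝ := fun n =>
    ((D ∩ Set.Icc (-(n : ℤ)) (n : ℤ)).ncard : ℝ) / (2 * (n : ℝ) + 1) with hfdef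
  set g : ℕ → ℝ := fun n => 1 / 2 + (K.toNat : ℝ) * (2 * (n : ℝ) + 1)⁻¹ with hgdef
  have hg : Tendsto g atTop (nhds (1 / 2 : ℝ)) := by
    rw [hgdef]
    have h1 := tendsto_inv_aux.const_mul (K.toNat : ℝ)
    have h2 : Tendsto (fun n : ℕ => (1 / 2 : ℝ) + (K.toNat : ℝ) * (2 * (n : ℝ) + 1)⁻¹) atTop
        (nhds ((1 / 2 : ℝ) + (K.toNat : ℝ) * 0)) :=
      tendsto_const_nhds.add h1
    simpa only [mul_zero, add_zero] using h2
  have hfg : ∀ n, f n ≤ g n := by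
    intro n
    have hk := key n
    have hpos : (0 : ℝ) < 2 * (n : ℝ) + 1 := by positivity
    have hkR : 2 * ((D ∩ Set.Icc (-(n : ℤ)) (n : ℤ)).ncard : ℝ) ≤
        2 * (n : ℝ) + 1 + 2 * (K.toNat : ℝ) := by
      have h := (Nat.cast_le (α := ℝ)).2 hk
      push_cast at h
      linarith
    have heq : g n = (2 * (n : ℝ) + 1 + 2 * (K.toNat : ℝ)) / (2 * (2 * (n : ℝ) + 1)) := by
      simp only [hgdef]
      field_simp
    rw [heq, hfdef]
    rw [div_le_div_iff₀ hpos (by positivity)]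
    nlinarith [hkR]
  have hbdd : IsBoundedUnder (· ≥ ·) atTop f :=
    isBoundedUnder_of ⟨0, fun n => densFun_nonneg D n⟩
  have h1 : liminf f atTop ≤ liminf g atTop :=
    liminf_le_liminf (Eventually.of_forall hfg) hbdd hg.isCoboundedUnder_ge
  calc lowerDensity D = liminf f atTop := rfl
    _ ≤ liminf g atTop := h1
    _ = 1 / 2 := hg.liminf_eq

theorem stmt_3 (S : Set ℤ) (d : ℕ) (hS : S.Finite) (h0 : 0 ∉ S)
    (hcard : S.ncard = d) (hd : 2 ≤ d) :
    1 / ((d : ℝ) + 1) ≤ dominationRatio S ∧ dominationRatio S ≤ 1 / 2 := by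
  have huniv : Dominating S Set.univ := fun m => Or.inl (Set.mem_univ m)
  have hne : (lowerDensity '' {D : Set ℤ | Dominating S D}).Nonempty :=
    ⟨lowerDensity Set.univ, Set.univ, huniv, rfl⟩
  have hlb : ∀ r ∈ lowerDensity '' {D : Set ℤ | Dominating S D}, 1 / ((d : ℝ) + 1) ≤ r := by
    rintro r ⟨D, hD, rfl⟩
    exact density_lower S d hS h0 hcard D hD
  constructor
  · exact le_csInf hne hlb
  · have hSne : S.Nonempty := by
      rw [Set.nonempty_iff_ne_empty]
      intro h
      rw [h, Set.ncard_empty] at hcard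
      omega
    obtain ⟨s, hs⟩ := hSne
    have hs0 : s ≠ 0 := fun h => h0 (h ▸ hs)
    obtain ⟨D, hDdom, hDle⟩ := density_upper S s hs hs0
    calc dominationRatio S ≤ lowerDensity D :=
          csInf_le ⟨1 / ((d : ℝ) + 1), hlb⟩ ⟨D, hDdom, rfl⟩
      _ ≤ 1 / 2 := hDle
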